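/- Let R be a ring and e ∈ R an idempotent such that the two-sided ideal ReR is projective as a right R-module. Then Re is projective as a right eRe-module. -/

import Mathlib

variable {R : Type*} [Ring R]

/-- The corner ring `eRe` associated to an idempotent `e` of `R`. -/
def Corner (e : R) (_he : IsIdempotentElem e) : Type _ := {x : R // e * x * e = x}

namespace Corner

variable {e : R} {he : IsIdempotentElem e}

instance : Zero (Corner e he) := ⟨⟨0, by simp⟩⟩
instance : Add (Corner e he) :=
  ⟨fun x y => ⟨x.1 + y.1, by rw [mul_add, add_mul, x.2, y.2]⟩⟩
instance : Neg (Corner e he) := ⟨fun x => ⟨-x.1, by rw [mul_neg, neg_mul, x.2]⟩⟩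
instance : Sub (Corner e he) :=
  ⟨fun x y => ⟨x.1 - y.1, by rw [mul_sub, sub_mul, x.2, y.2]⟩⟩
instance : SMul ℕ (Corner e he) :=
  ⟨fun n x => ⟨n • x.1, by rw [mul_smul_comm, smul_mul_assoc, x.2]⟩⟩
instance : SMul ℤ (Corner e he) :=
  ⟨fun n x => ⟨n • x.1, by rw [mul_smul_comm, smul_mul_assoc, x.2]⟩⟩

instance : AddCommGroup (Corner e he) :=
  Function.Injective.addCommGroup (fun x : Corner e he => x.1) Subtype.val_injective
    rfl (fun _ _ => rfl) (fun _ => rfl) (fun _ _ => rfl) (fun _ _ => rfl) (fun _ _ => rfl)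

instance : One (Corner e he) := ⟨⟨e, by rw [he, he]⟩⟩

instance : Mul (Corner e he) :=
  ⟨fun x y => ⟨x.1 * y.1, by
    conv_lhs => rw [← x.2, ← y.2]
    conv_rhs => rw [← x.2, ← y.2]
    simp only [← mul_assoc, he.eq]
    rw [mul_assoc (e * x.1 * e * e * y.1) e e, he.eq]⟩⟩

instance instRing : Ring (Corner e he) where
  __ := (inferInstance : AddCommGroup (Corner e he))
  mul_assoc x y z := Subtype.ext (mul_assoc x.1 y.1 z.1)
  one_mul x := Subtype.ext (by
    show e * x.1 = x.1
    conv_lhs => rw [← x.2]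
    rw [← mul_assoc, ← mul_assoc, he, x.2])
  mul_one x := Subtype.ext (by
    show x.1 * e = x.1
    conv_lhs => rw [← x.2]
    rw [mul_assoc, he, x.2])
  left_distrib x y z := Subtype.ext (mul_add x.1 y.1 z.1)
  right_distrib x y z := Subtype.ext (add_mul x.1 y.1 z.1)
  zero_mul x := Subtype.ext (zero_mul x.1)
  mul_zero x := Subtype.ext (mul_zero x.1)

end Corner

/-- The two-sided ideal `ReR` generated by an element `e`. -/
def TwoSidedIdeal.gen {R : Type*} [Ring R] (e : R) : TwoSidedIdeal R :=
  TwoSidedIdeal.span {e}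

/-- The left ideal `Re`, regarded as a right module over the corner ring `eRe`. -/
def ReC {R : Type*} [Ring R] (e : R) (_he : IsIdempotentElem e) : Type _ :=
  {x : R // x ∈ Submodule.span R {e}}

namespace ReC

variable {R : Type*} [Ring R] {e : R} {he : IsIdempotentElem e}

instance : AddCommGroup (ReC e he) :=
  inferInstanceAs (AddCommGroup (Submodule.span R ({e} : Set R)))

instance : SMul (Corner e he)ᵐᵒᵖ (ReC e he) :=
  ⟨fun c x => ⟨x.1 * c.unop.1, by
    obtain ⟨r, hr⟩ := Submodule.mem_span_singleton.1 x.2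
    refine Submodule.mem_span_singleton.2 ⟨r * e * e * c.unop.1, ?_⟩
    have hc := c.unop.2
    simp only [smul_eq_mul]
    rw [← hr]; simp only [smul_eq_mul]
    conv_rhs => rw [← hc]
    simp only [mul_assoc]⟩⟩

instance : Module (Corner e he)ᵐᵒᵖ (ReC e he) where
  one_smul x := Subtype.ext (by
    show x.1 * e = x.1
    obtain ⟨r, hr⟩ := Submodule.mem_span_singleton.1 x.2
    rw [← hr]; simp only [smul_eq_mul]; rw [mul_assoc, he])
  mul_smul c d x := Subtype.ext (by
    show x.1 * (d.unop.1 * c.unop.1) = x.1 * d.unop.1 * c.unop.1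
    rw [mul_assoc])
  smul_zero c := Subtype.ext (zero_mul _)
  smul_add c x y := Subtype.ext (add_mul x.1 y.1 c.unop.1)
  add_smul c d x := Subtype.ext (mul_add x.1 c.unop.1 d.unop.1)
  zero_smul x := Subtype.ext (mul_zero x.1)

end ReC

section ReProjAux

private lemma neg_list_sum' {R : Type*} [Ring R] (l : List (R × R)) (f : R × R → R) :
    -(l.map f).sum = (l.map fun p => -f p).sum := by
  induction l with
  | nil => simp
  | cons p l ih => simp [← ih]; abel

private lemma exists_list_of_mem_gen {R : Type*} [Ring R] {e : R} (x : R)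
    (hx : x ∈ TwoSidedIdeal.span {e}) :
    ∃ l : List (R × R), x = (l.map fun p => p.1 * e * p.2).sum := by
  rw [TwoSidedIdeal.mem_span_iff_mem_addSubgroup_closure] at hx
  induction hx using AddSubgroup.closure_induction with
  | mem z hz =>
    obtain ⟨ae, ⟨a, -, e', he', rfl⟩, b, -, rfl⟩ := hz
    rcases he' with rfl
    exact ⟨[(a, b)], by simp⟩
  | zero => exact ⟨[], by simp⟩
  | add _ _ _ _ h1 h2 =>
    obtain ⟨l1, hl1⟩ := h1; obtain ⟨l2, hl2⟩ := h2
    exact ⟨l1 ++ l2, by simp [hl1, hl2]⟩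
  | neg z _ hzz =>
    obtain ⟨l, hl⟩ := hzz
    refine ⟨l.map fun p => (-p.1, p.2), ?_⟩
    rw [hl, neg_list_sum' _ (fun p => p.1 * e * p.2), List.map_map]
    simp [Function.comp_def]

private lemma list_sum_map_add' {α M : Type*} [AddCommMonoid M] (l : List α) (f g : α → M) :
    (l.map fun a => f a + g a).sum = (l.map f).sum + (l.map g).sum := by
  induction l with
  | nil => simp
  | cons p l ih => simp [ih]; abel

private lemma list_sum_map_mul_right' {α R : Type*} [Ring R] (l : List α) (f : α → R) (r : R) :
    (l.map fun a => f a * r).sum = (l.map f).sum * r := by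
  induction l with
  | nil => simp
  | cons p l ih => simp [ih, add_mul]

/-- `e * x * e` as an element of the corner ring. -/
private def cor {R : Type*} [Ring R] {e : R} (he : IsIdempotentElem e) (x : R) :
    Corner e he :=
  ⟨e * x * e, by
    rw [show e * (e * x * e) = e * x * e by rw [← mul_assoc, ← mul_assoc, he.eq],
      mul_assoc, he.eq]⟩

/-- `a * e` as an element of `Re`. -/
private def reMk {R : Type*} [Ring R] {e : R} (he : IsIdempotentElem e) (a : R) :
    ReC e he :=
  ⟨a * e, Submodule.mem_span_singleton.2 ⟨a, rfl⟩⟩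

end ReProjAux

/-- If `e` is an idempotent of `R` such that `ReR` is projective as a right `R`-module,
then `Re` is projective as a right `eRe`-module. -/
theorem re_projective_over_corner {R : Type*} [Ring R] (e : R)
    (he : IsIdempotentElem e)
    (h : Module.Projective Rᵐᵒᵖ (TwoSidedIdeal.gen e)) :
    Module.Projective (Corner e he)ᵐᵒᵖ (ReC e he) := by
  classical
  obtain ⟨s, hs⟩ := Module.projective_def.1 h
  choose l hl using fun i : TwoSidedIdeal.gen e =>
    exists_list_of_mem_gen (e := e) i.1 i.2
  have hee : ∀ x : R, e * (e * x) = e * x := fun x => by rw [← mul_assoc, he.eq]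
  have hmem : ∀ a : R, a * e ∈ Submodule.span R {e} :=
    fun a => Submodule.mem_span_singleton.2 ⟨a, rfl⟩
  have hIe : ∀ y : ReC e he, y.1 ∈ TwoSidedIdeal.gen e := by
    intro y
    obtain ⟨r, hr⟩ := Submodule.mem_span_singleton.1 y.2
    rw [← hr, smul_eq_mul]
    exact (TwoSidedIdeal.gen e).mul_mem_left r e (TwoSidedIdeal.subset_span rfl)
  have hye : ∀ y : ReC e he, y.1 * e = y.1 := by
    intro y
    obtain ⟨r, hr⟩ := Submodule.mem_span_singleton.1 y.2
    rw [← hr, smul_eq_mul, mul_assoc, he.eq]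
  set G : TwoSidedIdeal.gen e → Rᵐᵒᵖ → (ReC e he →₀ (Corner e he)ᵐᵒᵖ) := fun i r =>
    ((l i).map fun p =>
      Finsupp.single (reMk he p.1)
        (MulOpposite.op (cor he (p.2 * r.unop)))).sum with hGdef
  have hcor0 : cor (e := e) he 0 = 0 := Subtype.ext (by show e * 0 * e = 0; simp)
  have hG0 : ∀ i, G i 0 = 0 := by
    intro i
    simp [hGdef, hcor0]
  have hGadd : ∀ i r r', G i (r + r') = G i r + G i r' := by
    intro i r r'
    have hca : ∀ p : R × R,
        cor (e := e) he (p.2 * (r + r').unop)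
          = cor he (p.2 * r.unop) + cor he (p.2 * r'.unop) := by
      intro p; apply Subtype.ext
      show e * (p.2 * (r.unop + r'.unop)) * e = e * (p.2 * r.unop) * e + e * (p.2 * r'.unop) * e
      rw [mul_add, mul_add, add_mul]
    simp only [hGdef, hca, MulOpposite.op_add, Finsupp.single_add]
    exact list_sum_map_add' _ _ _
  have hGsmul : ∀ (i) (c : (Corner e he)ᵐᵒᵖ) (r : Rᵐᵒᵖ),
      G i (MulOpposite.op c.unop.1 * r) = c • G i r := by
    intro i c r
    have key : ∀ p : R × R,
        cor (e := e) he (p.2 * (MulOpposite.op c.unop.1 * r).unop)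
          = cor he (p.2 * r.unop) * c.unop := by
      intro p; apply Subtype.ext
      show e * (p.2 * (r.unop * c.unop.1)) * e = (e * (p.2 * r.unop) * e) * c.unop.1
      rw [← c.unop.2]
      simp only [mul_assoc, hee, he.eq]
    simp only [hGdef, Finsupp.smul_sum, List.map_map]
    rw [List.smul_sum, List.map_map]
    congr 1
    refine List.map_congr_left fun p _ => ?_
    rw [Function.comp_apply, key, Finsupp.smul_single]
    congr 1
  refine Module.projective_def.2 ⟨⟨⟨fun y => (s ⟨y.1, hIe y⟩).sum G, ?_⟩, ?_⟩, ?_⟩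
  · -- additivity
    intro y y'
    have h1 : (⟨(y + y').1, hIe _⟩ : TwoSidedIdeal.gen e) = ⟨y.1, hIe y⟩ + ⟨y'.1, hIe y'⟩ :=
      Subtype.ext rfl
    rw [h1, map_add]
    exact Finsupp.sum_add_index' hG0 hGadd
  · -- smul
    intro c y
    dsimp only
    have h1 : (⟨(c • y).1, hIe _⟩ : TwoSidedIdeal.gen e)
        = MulOpposite.op c.unop.1 • ⟨y.1, hIe y⟩ := Subtype.ext rfl
    rw [h1, map_smul]
    rw [Finsupp.sum_smul_index' hG0]
    simp only [smul_eq_mul, hGsmul]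
    exact (Finsupp.smul_sum).symm
  · -- section property
    intro y
    apply Subtype.ext
    set g := s ⟨y.1, hIe y⟩ with hg
    set vR : ReC e he →+ R := AddMonoidHom.mk' Subtype.val (fun _ _ => rfl) with hvR
    set vI : TwoSidedIdeal.gen e →+ R := AddMonoidHom.mk' Subtype.val (fun _ _ => rfl) with hvI
    show vR (Finsupp.linearCombination _ id (g.sum G)) = y.1
    rw [map_finsuppSum, map_finsuppSum]
    have key : ∀ (i : TwoSidedIdeal.gen e) (r : Rᵐᵒᵖ),
        vR (Finsupp.linearCombination (Corner e he)ᵐᵒᵖ id (G i r))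
          = i.1 * r.unop * e := by
      intro i r
      simp only [hGdef]
      rw [map_list_sum, map_list_sum, List.map_map, List.map_map]
      trans ((l i).map fun p : R × R => p.1 * e * p.2 * (r.unop * e)).sum
      · congr 1
        refine List.map_congr_left fun p _ => ?_
        simp only [Function.comp_apply, Finsupp.linearCombination_single, id]
        show (p.1 * e) * (e * (p.2 * r.unop) * e) = p.1 * e * p.2 * (r.unop * e)
        simp only [mul_assoc, hee]
      · rw [list_sum_map_mul_right', ← hl i, ← mul_assoc]
    calc (g.sum fun i r => vR (Finsupp.linearCombination (Corner e he)ᵐᵒᵖ id (G i r)))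
        = g.sum fun i r => i.1 * r.unop * e :=
          Finsupp.sum_congr fun i _ => key i (g i)
      _ = (g.sum fun i r => i.1 * r.unop) * e := (Finsupp.sum_mul _ _).symm
      _ = vI (Finsupp.linearCombination Rᵐᵒᵖ id g) * e := by
          rw [Finsupp.linearCombination_apply, map_finsuppSum]
          rfl
      _ = y.1 := by rw [hs]; exact hye y
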